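/- (Equation (3.61)/(3.57).) For every μ₁ ∈ [0,1], with μ₂ := 1−μ₁: ∫_{ℝ²}∫_{ℝ²}∫_{ℝ²} (Σψ_in)(q₁,q₂)·(Σψ_in)(q₃,q₂)·ψ_in(q₁,q₃) dq₁ dq₂ dq₃ = J(μ₁,μ₂)/π³. -/

import Mathlib

open MeasureTheory

noncomputable abbrev R2 : Type := EuclideanSpace ℝ (Fin 2)

/-- The modified Bessel function of order zero. -/
noncomputable def I0 (x : ℝ) : ℝ :=
  (1 / Real.pi) * ∫ θ in (0:ℝ)..Real.pi, Real.exp (x * Real.cos θ)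

/-- The function `J(μ₁,μ₂)` of (3.65). -/
noncomputable def Jfun (μ₁ μ₂ : ℝ) : ℝ :=
  ∫ q₂ : R2, (∫ q₁ : R2,
    Real.exp (-(1/2) * (μ₁ ^ 2 + μ₂ ^ 2) * ‖q₁ + q₂‖ ^ 2
        - ‖μ₂ • q₁ - μ₁ • q₂‖ ^ 2 - ‖q₁‖ ^ 2 / 2) *
      I0 (|μ₁ - μ₂| * ‖q₁ + q₂‖ * ‖μ₂ • q₁ - μ₁ • q₂‖)) ^ 2

/-- The unit vector `(cos θ, sin θ)` in `ℝ²`. -/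
noncomputable def unitVec (θ : ℝ) : R2 :=
  (WithLp.equiv 2 (Fin 2 → ℝ)).symm ![Real.cos θ, Real.sin θ]

/-- The Gaussian `ψ(q) = π^{-1/2} e^{-|q|²/2}`. -/
noncomputable def psi (q : R2) : ℝ := (1 / Real.sqrt Real.pi) * Real.exp (-‖q‖ ^ 2 / 2)

/-- The angular average `(Σψ_in)(q₁,q₂)`, with `q_cm = q₁+q₂` and `q = μ₂q₁-μ₁q₂`. -/
noncomputable def SigmaPsi (μ₁ : ℝ) (q₁ q₂ : R2) : ℝ :=
  (1 / (2 * Real.pi)) * ∫ θ in (0:ℝ)..(2 * Real.pi),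
    psi (μ₁ • (q₁ + q₂) + ‖(1 - μ₁) • q₁ - μ₁ • q₂‖ • unitVec θ) *
      psi ((1 - μ₁) • (q₁ + q₂) - ‖(1 - μ₁) • q₁ - μ₁ • q₂‖ • unitVec θ)

lemma expcos_cont (x : ℝ) : Continuous fun θ : ℝ => Real.exp (x * Real.cos θ) := by fun_prop

lemma expcos_ii (x a b : ℝ) :
    IntervalIntegrable (fun θ => Real.exp (x * Real.cos θ)) volume a b :=
  (expcos_cont x).intervalIntegrable a b

lemma I0_continuous : Continuous I0 := by
  have h : Continuous fun x : ℝ => ∫ θ in (0:ℝ)..Real.pi, Real.exp (x * Real.cos θ) := by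
    apply intervalIntegral.continuous_parametric_intervalIntegral_of_continuous'
    fun_prop
  exact continuous_const.mul h

lemma I0_nonneg (x : ℝ) : 0 ≤ I0 x := by
  refine mul_nonneg (by positivity) ?_
  exact intervalIntegral.integral_nonneg Real.pi_pos.le fun θ _ => (Real.exp_pos _).le

lemma int0pi (x : ℝ) : ∫ θ in (0:ℝ)..Real.pi, Real.exp (x * Real.cos θ) = Real.pi * I0 x := by
  unfold I0; field_simp

lemma I0_le_exp_abs (x : ℝ) : I0 x ≤ Real.exp |x| := by
  have h : ∫ θ in (0:ℝ)..Real.pi, Real.exp (x * Real.cos θ)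
      ≤ ∫ _θ in (0:ℝ)..Real.pi, Real.exp |x| := by
    refine intervalIntegral.integral_mono_on Real.pi_pos.le (expcos_ii x 0 Real.pi)
      intervalIntegrable_const fun θ _ => ?_
    refine Real.exp_le_exp.2 ?_
    calc x * Real.cos θ ≤ |x * Real.cos θ| := le_abs_self _
      _ = |x| * |Real.cos θ| := abs_mul _ _
      _ ≤ |x| * 1 := by
          exact mul_le_mul_of_nonneg_left (Real.abs_cos_le_one θ) (abs_nonneg x)
      _ = |x| := mul_one _
  rw [intervalIntegral.integral_const] at h
  unfold I0
  rw [div_mul_eq_mul_div, one_mul, div_le_iff₀ Real.pi_pos]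
  calc (∫ θ in (0:ℝ)..Real.pi, Real.exp (x * Real.cos θ)) ≤ (Real.pi - 0) • Real.exp |x| := h
    _ = Real.exp |x| * Real.pi := by simp [smul_eq_mul]; ring

lemma I0_neg (x : ℝ) : I0 (-x) = I0 x := by
  unfold I0
  congr 1
  have h := intervalIntegral.integral_comp_sub_left
    (fun θ => Real.exp (x * Real.cos θ)) Real.pi (a := 0) (b := Real.pi)
  simp only [Real.cos_pi_sub, mul_neg, sub_self, sub_zero, ← neg_mul] at h
  simpa using h

lemma I0_abs (x : ℝ) : I0 |x| = I0 x := by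
  rcases abs_choice x with h | h
  · rw [h]
  · rw [h, I0_neg]

lemma angular (x φ : ℝ) :
    ∫ θ in (0:ℝ)..(2 * Real.pi), Real.exp (x * Real.cos (θ - φ))
      = 2 * Real.pi * I0 x := by
  have hper : Function.Periodic (fun θ => Real.exp (x * Real.cos θ)) (2 * Real.pi) :=
    fun θ => by simp [Real.cos_add_two_pi]
  rw [intervalIntegral.integral_comp_sub_right (fun θ => Real.exp (x * Real.cos θ)) φ]
  have h1 := hper.intervalIntegral_add_eq (0 - φ) 0
  have h2 : (0:ℝ) - φ + 2 * Real.pi = 2 * Real.pi - φ := by ring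
  rw [h2, zero_add] at h1
  rw [h1]
  rw [← intervalIntegral.integral_add_adjacent_intervals (expcos_ii x 0 Real.pi)
    (expcos_ii x Real.pi (2 * Real.pi))]
  have h3 : ∫ θ in Real.pi..(2 * Real.pi), Real.exp (x * Real.cos θ)
      = ∫ θ in (0:ℝ)..Real.pi, Real.exp (x * Real.cos (θ + Real.pi)) := by
    rw [intervalIntegral.integral_comp_add_right (fun θ => Real.exp (x * Real.cos θ)) Real.pi]
    norm_num [two_mul]
  have h4 : ∀ θ : ℝ, Real.exp (x * Real.cos (θ + Real.pi)) = Real.exp (-x * Real.cos θ) := by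
    intro θ; rw [Real.cos_add_pi]; ring_nf
  simp only [h4] at h3
  rw [h3, int0pi, int0pi, I0_neg]
  ring

lemma norm_unitVec (θ : ℝ) : ‖unitVec θ‖ = 1 := by
  rw [EuclideanSpace.norm_eq]
  simp [unitVec, Fin.sum_univ_two, Real.norm_eq_abs, sq_abs, Real.cos_sq_add_sin_sq]

lemma inner_unitVec (x : R2) (θ : ℝ) :
    (inner ℝ x (unitVec θ) : ℝ) = x 0 * Real.cos θ + x 1 * Real.sin θ := by
  simp [PiLp.inner_apply, unitVec, Fin.sum_univ_two, RCLike.inner_apply, mul_comm]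

lemma exists_angle (Q : R2) :
    ∃ φ : ℝ, Q 0 = ‖Q‖ * Real.cos φ ∧ Q 1 = ‖Q‖ * Real.sin φ := by
  set z : ℂ := ⟨Q 0, Q 1⟩ with hz
  have habs : ‖z‖ = ‖Q‖ := by
    rw [Complex.norm_def, Complex.normSq_apply, EuclideanSpace.norm_eq]
    simp [hz, Fin.sum_univ_two, Real.norm_eq_abs, sq_abs, sq]
  refine ⟨Complex.arg z, ?_, ?_⟩
  · rw [← habs, Complex.norm_mul_cos_arg]
  · rw [← habs, Complex.norm_mul_sin_arg]

noncomputable def gfun (μ₁ : ℝ) (p : R2 × R2) : ℝ :=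
  Real.exp (-(1/2) * (μ₁ ^ 2 + (1 - μ₁) ^ 2) * ‖p.1 + p.2‖ ^ 2
      - ‖(1 - μ₁) • p.1 - μ₁ • p.2‖ ^ 2 - ‖p.1‖ ^ 2 / 2) *
    I0 (|μ₁ - (1 - μ₁)| * ‖p.1 + p.2‖ * ‖(1 - μ₁) • p.1 - μ₁ • p.2‖)

lemma gfun_continuous (μ₁ : ℝ) : Continuous (gfun μ₁) := by
  unfold gfun
  apply Continuous.mul
  · exact Real.continuous_exp.comp (by fun_prop)
  · exact I0_continuous.comp (by fun_prop)

lemma gfun_nonneg (μ₁ : ℝ) (p : R2 × R2) : 0 ≤ gfun μ₁ p :=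
  mul_nonneg (Real.exp_pos _).le (I0_nonneg _)

lemma gfun_le (μ₁ : ℝ) (p : R2 × R2) :
    gfun μ₁ p ≤ Real.exp (-(3/8) * ‖p.1‖ ^ 2) * Real.exp (-(1/16) * ‖p.2‖ ^ 2) := by
  obtain ⟨q₁, q₂⟩ := p
  set X : ℝ := ‖q₁ + q₂‖ with hX
  set Y : ℝ := ‖(1 - μ₁) • q₁ - μ₁ • q₂‖ with hY
  set n1 : ℝ := ‖q₁‖ with hn1
  set n2 : ℝ := ‖q₂‖ with hn2
  set d : ℝ := |μ₁ - (1 - μ₁)| with hd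
  have hX0 : 0 ≤ X := norm_nonneg _
  have hY0 : 0 ≤ Y := norm_nonneg _
  have hn10 : 0 ≤ n1 := norm_nonneg _
  have hn20 : 0 ≤ n2 := norm_nonneg _
  have hd0 : 0 ≤ d := abs_nonneg _
  have hdsq : d ^ 2 = (2 * μ₁ - 1) ^ 2 := by
    rw [hd, sq_abs]; ring
  have htri : n2 ≤ X + n1 := by
    have h := norm_sub_le (q₁ + q₂) q₁
    rw [add_sub_cancel_left] at h
    exact h
  have hB0 : 0 ≤ d * X * Y := by positivity
  calc gfun μ₁ (q₁, q₂)
      = Real.exp (-(1/2) * (μ₁ ^ 2 + (1 - μ₁) ^ 2) * X ^ 2 - Y ^ 2 - n1 ^ 2 / 2) *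
        I0 (d * X * Y) := rfl
    _ ≤ Real.exp (-(1/2) * (μ₁ ^ 2 + (1 - μ₁) ^ 2) * X ^ 2 - Y ^ 2 - n1 ^ 2 / 2) *
        Real.exp (d * X * Y) := by
        refine mul_le_mul_of_nonneg_left ?_ (Real.exp_pos _).le
        calc I0 (d * X * Y) ≤ Real.exp |d * X * Y| := I0_le_exp_abs _
          _ = Real.exp (d * X * Y) := by rw [abs_of_nonneg hB0]
    _ = Real.exp ((-(1/2) * (μ₁ ^ 2 + (1 - μ₁) ^ 2) * X ^ 2 - Y ^ 2 - n1 ^ 2 / 2)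
          + d * X * Y) := by rw [← Real.exp_add]
    _ ≤ Real.exp (-(3/8) * n1 ^ 2 + -(1/16) * n2 ^ 2) := by
        refine Real.exp_le_exp.2 ?_
        nlinarith [sq_nonneg (d * X - 2 * Y), sq_nonneg (2 * μ₁ - 1),
          mul_nonneg (by linarith : (0:ℝ) ≤ X + n1 - n2)
            (by linarith : (0:ℝ) ≤ X + n1 + n2),
          sq_nonneg X, sq_nonneg n1, sq_nonneg (X - n1), hdsq]
    _ = Real.exp (-(3/8) * n1 ^ 2) * Real.exp (-(1/16) * n2 ^ 2) := by
        rw [← Real.exp_add]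

lemma integrable_gauss {b : ℝ} (hb : 0 < b) :
    Integrable (fun v : R2 => Real.exp (-b * ‖v‖ ^ 2)) := by
  have h := (GaussianFourier.integrable_cexp_neg_mul_sq_norm_add
    (V := R2) (b := (b : ℂ)) (by simpa using hb) 0 0).norm
  refine h.congr ?_
  filter_upwards with v
  rw [Complex.norm_exp]
  simp [← Complex.ofReal_pow]

lemma sigma_eq (μ₁ : ℝ) (a b : R2) :
    SigmaPsi μ₁ a b = (1 / Real.pi) *
      (Real.exp (-(1/2) * (μ₁ ^ 2 + (1 - μ₁) ^ 2) * ‖a + b‖ ^ 2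
          - ‖(1 - μ₁) • a - μ₁ • b‖ ^ 2) *
        I0 (|μ₁ - (1 - μ₁)| * ‖a + b‖ * ‖(1 - μ₁) • a - μ₁ • b‖)) := by
  set Q : R2 := a + b with hQ
  set r : ℝ := ‖(1 - μ₁) • a - μ₁ • b‖ with hr
  have hr0 : 0 ≤ r := norm_nonneg _
  obtain ⟨φ, hc, hs⟩ := exists_angle Q
  set x : ℝ := -((μ₁ - (1 - μ₁)) * r * ‖Q‖) with hx
  have hpt : ∀ θ : ℝ,
      psi (μ₁ • Q + r • unitVec θ) * psi ((1 - μ₁) • Q - r • unitVec θ)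
        = ((1 / Real.pi) *
            Real.exp (-(1/2) * (μ₁ ^ 2 + (1 - μ₁) ^ 2) * ‖Q‖ ^ 2 - r ^ 2)) *
          Real.exp (x * Real.cos (θ - φ)) := by
    intro θ
    have hinner : (inner ℝ Q (unitVec θ) : ℝ) = ‖Q‖ * Real.cos (θ - φ) := by
      rw [inner_unitVec, hc, hs, Real.cos_sub]; ring
    have hN : ‖μ₁ • Q + r • unitVec θ‖ ^ 2 + ‖(1 - μ₁) • Q - r • unitVec θ‖ ^ 2
        = (μ₁ ^ 2 + (1 - μ₁) ^ 2) * ‖Q‖ ^ 2 + 2 * r ^ 2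
          + (μ₁ - (1 - μ₁)) * r * (2 * (‖Q‖ * Real.cos (θ - φ))) := by
      rw [norm_add_sq_real, norm_sub_sq_real]
      simp only [real_inner_smul_left, real_inner_smul_right, hinner, norm_smul,
        norm_unitVec, Real.norm_eq_abs, mul_one, mul_pow, sq_abs]
      ring
    unfold psi
    have hππ : Real.sqrt Real.pi * Real.sqrt Real.pi = Real.pi :=
      Real.mul_self_sqrt Real.pi_pos.le
    have key : Real.exp (-‖μ₁ • Q + r • unitVec θ‖ ^ 2 / 2) *
        Real.exp (-‖(1 - μ₁) • Q - r • unitVec θ‖ ^ 2 / 2)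
        = Real.exp (-(1/2) * (μ₁ ^ 2 + (1 - μ₁) ^ 2) * ‖Q‖ ^ 2 - r ^ 2) *
          Real.exp (x * Real.cos (θ - φ)) := by
      rw [← Real.exp_add, ← Real.exp_add]
      congr 1
      have := hN
      rw [hx]
      nlinarith [hN]
    calc (1 / Real.sqrt Real.pi) * Real.exp (-‖μ₁ • Q + r • unitVec θ‖ ^ 2 / 2) *
          ((1 / Real.sqrt Real.pi) * Real.exp (-‖(1 - μ₁) • Q - r • unitVec θ‖ ^ 2 / 2))
        = (1 / Real.pi) * (Real.exp (-‖μ₁ • Q + r • unitVec θ‖ ^ 2 / 2) *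
            Real.exp (-‖(1 - μ₁) • Q - r • unitVec θ‖ ^ 2 / 2)) := by
          rw [show (1:ℝ) / Real.sqrt Real.pi * Real.exp (-‖μ₁ • Q + r • unitVec θ‖ ^ 2 / 2) *
              ((1 / Real.sqrt Real.pi) * Real.exp (-‖(1 - μ₁) • Q - r • unitVec θ‖ ^ 2 / 2))
            = (1 / (Real.sqrt Real.pi * Real.sqrt Real.pi)) *
              (Real.exp (-‖μ₁ • Q + r • unitVec θ‖ ^ 2 / 2) *
               Real.exp (-‖(1 - μ₁) • Q - r • unitVec θ‖ ^ 2 / 2)) from by ring, hππ]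
      _ = _ := by rw [key]; ring
  unfold SigmaPsi
  rw [show ∫ θ in (0:ℝ)..(2 * Real.pi),
      psi (μ₁ • (a + b) + ‖(1 - μ₁) • a - μ₁ • b‖ • unitVec θ) *
        psi ((1 - μ₁) • (a + b) - ‖(1 - μ₁) • a - μ₁ • b‖ • unitVec θ)
      = ∫ θ in (0:ℝ)..(2 * Real.pi),
          ((1 / Real.pi) * Real.exp (-(1/2) * (μ₁ ^ 2 + (1 - μ₁) ^ 2) * ‖Q‖ ^ 2 - r ^ 2)) *
            Real.exp (x * Real.cos (θ - φ)) from
    intervalIntegral.integral_congr fun θ _ => hpt θ]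
  rw [intervalIntegral.integral_const_mul, angular]
  have hI : I0 x = I0 (|μ₁ - (1 - μ₁)| * ‖Q‖ * r) := by
    rw [← I0_abs x, hx, abs_neg, abs_mul, abs_mul, abs_of_nonneg hr0,
      abs_of_nonneg (norm_nonneg Q)]
    congr 1
    ring
  rw [hI]
  have hπ : Real.pi ≠ 0 := Real.pi_ne_zero
  field_simp

lemma gfun_fubini (μ₁ : ℝ) :
    ∫ x : R2 × R2 × R2, gfun μ₁ (x.1, x.2.1) * gfun μ₁ (x.2.2, x.2.1)
      = ∫ q₂ : R2, (∫ q₁ : R2, gfun μ₁ (q₁, q₂)) ^ 2 := by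
  set G := gfun μ₁ with hGdef
  set b1 : R2 → ℝ := fun t => Real.exp (-(3/8) * ‖t‖ ^ 2) with hb1def
  set b2 : R2 → ℝ := fun t => Real.exp (-(1/16) * ‖t‖ ^ 2) with hb2def
  have hb1 : Integrable b1 := integrable_gauss (by norm_num)
  have hb2 : Integrable b2 := integrable_gauss (by norm_num)
  have hb1n : ∀ t : R2, 0 ≤ b1 t := fun t => (Real.exp_pos _).le
  have hb2n : ∀ t : R2, 0 ≤ b2 t := fun t => (Real.exp_pos _).le
  have hb2sq : Integrable (fun t : R2 => b2 t * b2 t) := by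
    have heq : (fun t : R2 => b2 t * b2 t) = fun t : R2 => Real.exp (-(1/8) * ‖t‖ ^ 2) := by
      funext t
      rw [hb2def]
      rw [← Real.exp_add]
      congr 1
      ring
    rw [heq]
    exact integrable_gauss (by norm_num)
  have hb2le1 : ∀ t : R2, b2 t ≤ 1 := by
    intro t
    rw [hb2def]
    refine Real.exp_le_one_iff.2 ?_
    nlinarith [sq_nonneg ‖t‖]
  have hGle : ∀ p : R2 × R2, G p ≤ b1 p.1 * b2 p.2 := fun p => gfun_le μ₁ p
  have hG0 : ∀ p, 0 ≤ G p := gfun_nonneg μ₁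
  have hGc : Continuous G := gfun_continuous μ₁
  have hb12i : Integrable (fun p : R2 × R2 => b1 p.1 * b2 p.2) := by
    rw [Measure.volume_eq_prod]; exact hb1.mul_prod hb2
  have hGi : Integrable G := by
    refine Integrable.mono' hb12i hGc.aestronglyMeasurable ?_
    filter_upwards with p
    rw [Real.norm_eq_abs, abs_of_nonneg (hG0 p)]
    exact hGle p
  set h : R2 → ℝ := fun q₂ => ∫ q₃ : R2, G (q₃, q₂) with hhdef
  have hslice : ∀ q₂ : R2, Integrable (fun q₃ : R2 => G (q₃, q₂)) := by
    intro q₂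
    refine Integrable.mono' (hb1.mul_const (b2 q₂))
      (hGc.comp (by fun_prop : Continuous fun q₃ : R2 => (q₃, q₂))).aestronglyMeasurable ?_
    filter_upwards with q₃
    rw [Real.norm_eq_abs, abs_of_nonneg (hG0 _)]
    exact hGle _
  have hh0 : ∀ q₂, 0 ≤ h q₂ := fun q₂ => integral_nonneg fun q₃ => hG0 _
  set C : ℝ := ∫ t : R2, b1 t with hCdef
  have hhC : ∀ q₂, h q₂ ≤ C := by
    intro q₂
    refine integral_mono (hslice q₂) hb1 fun q₃ => ?_
    calc G (q₃, q₂) ≤ b1 q₃ * b2 q₂ := hGle _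
      _ ≤ b1 q₃ * 1 := mul_le_mul_of_nonneg_left (hb2le1 q₂) (hb1n q₃)
      _ = b1 q₃ := mul_one _
  have hGip : Integrable G (volume.prod volume) := by rwa [Measure.volume_eq_prod] at hGi
  have hhm : Integrable h := by
    have hswap : Integrable (fun p : R2 × R2 => G (p.2, p.1)) (volume.prod volume) :=
      hGip.swap
    exact hswap.integral_prod_left
  have hK : Integrable (fun x : R2 × (R2 × R2) => G (x.1, x.2.1) * G (x.2.2, x.2.1))
      (volume.prod volume) := by
    refine Integrable.mono'
      (hb1.mul_prod (show Integrable (fun p : R2 × R2 => b2 p.1 * b2 p.1 * b1 p.2) volume from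
        by rw [Measure.volume_eq_prod]; exact hb2sq.mul_prod hb1)) ?_ ?_
    · exact ((hGc.comp (by fun_prop : Continuous fun x : R2 × (R2 × R2) => (x.1, x.2.1))).mul
        (hGc.comp (by fun_prop : Continuous fun x : R2 × (R2 × R2) =>
          (x.2.2, x.2.1)))).aestronglyMeasurable
    · filter_upwards with x
      rw [Real.norm_eq_abs, abs_of_nonneg (mul_nonneg (hG0 _) (hG0 _))]
      calc G (x.1, x.2.1) * G (x.2.2, x.2.1)
          ≤ (b1 x.1 * b2 x.2.1) * (b1 x.2.2 * b2 x.2.1) :=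
            mul_le_mul (hGle _) (hGle _) (hG0 _) (mul_nonneg (hb1n _) (hb2n _))
        _ = b1 x.1 * (b2 x.2.1 * b2 x.2.1 * b1 x.2.2) := by ring
  have hinner : ∀ q₁ : R2, (∫ y : R2 × R2, G (q₁, y.1) * G (y.2, y.1))
      = ∫ q₂ : R2, G (q₁, q₂) * h q₂ := by
    intro q₁
    have hint : Integrable (fun y : R2 × R2 => G (q₁, y.1) * G (y.2, y.1))
        (volume.prod volume) := by
      have hbd : Integrable (fun y : R2 × R2 => b1 q₁ * (b2 y.1 * b2 y.1 * b1 y.2))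
          (volume.prod volume) := (hb2sq.mul_prod hb1).const_mul (b1 q₁)
      refine Integrable.mono' hbd ?_ ?_
      · exact ((hGc.comp (by fun_prop : Continuous fun y : R2 × R2 => (q₁, y.1))).mul
          (hGc.comp (by fun_prop : Continuous fun y : R2 × R2 => (y.2, y.1)))).aestronglyMeasurable
      · filter_upwards with y
        rw [Real.norm_eq_abs, abs_of_nonneg (mul_nonneg (hG0 _) (hG0 _))]
        calc G (q₁, y.1) * G (y.2, y.1)
            ≤ (b1 q₁ * b2 y.1) * (b1 y.2 * b2 y.1) :=
              mul_le_mul (hGle _) (hGle _) (hG0 _) (mul_nonneg (hb1n _) (hb2n _))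
          _ = b1 q₁ * (b2 y.1 * b2 y.1 * b1 y.2) := by ring
    rw [Measure.volume_eq_prod, integral_prod _ hint]
    refine integral_congr_ae (Filter.Eventually.of_forall fun q₂ => ?_)
    show ∫ q₃ : R2, G (q₁, q₂) * G (q₃, q₂) = G (q₁, q₂) * h q₂
    exact integral_const_mul _ _
  have hsw : Integrable (Function.uncurry fun q₁ q₂ : R2 => G (q₁, q₂) * h q₂)
      (volume.prod volume) := by
    have hbd2 : Integrable (fun p : R2 × R2 => b1 p.1 * b2 p.2 * C) (volume.prod volume) :=
      (hb1.mul_prod hb2).mul_const C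
    refine Integrable.mono' hbd2 ?_ ?_
    · have hmh : AEStronglyMeasurable (fun p : R2 × R2 => h p.2) (volume.prod volume) :=
        hhm.aestronglyMeasurable.comp_quasiMeasurePreserving
          Measure.quasiMeasurePreserving_snd
      have hmg : AEStronglyMeasurable G (volume.prod volume) := hGip.aestronglyMeasurable
      exact hmg.mul hmh
    · filter_upwards with p
      have : Function.uncurry (fun q₁ q₂ : R2 => G (q₁, q₂) * h q₂) p
          = G (p.1, p.2) * h p.2 := rfl
      rw [this, Real.norm_eq_abs, abs_of_nonneg (mul_nonneg (hG0 _) (hh0 _))]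
      exact mul_le_mul (hGle _) (hhC _) (hh0 _) (mul_nonneg (hb1n _) (hb2n _))
  calc ∫ x : R2 × R2 × R2, G (x.1, x.2.1) * G (x.2.2, x.2.1)
      = ∫ q₁ : R2, ∫ y : R2 × R2, G (q₁, y.1) * G (y.2, y.1) := by
        rw [Measure.volume_eq_prod]
        exact integral_prod _ hK
    _ = ∫ q₁ : R2, ∫ q₂ : R2, G (q₁, q₂) * h q₂ :=
        integral_congr_ae (Filter.Eventually.of_forall fun q₁ => hinner q₁)
    _ = ∫ q₂ : R2, ∫ q₁ : R2, G (q₁, q₂) * h q₂ := integral_integral_swap hsw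
    _ = ∫ q₂ : R2, (∫ q₁ : R2, G (q₁, q₂)) * h q₂ := by
        refine integral_congr_ae (Filter.Eventually.of_forall fun q₂ => ?_)
        exact integral_mul_const _ _
    _ = ∫ q₂ : R2, (∫ q₁ : R2, G (q₁, q₂)) ^ 2 := by
        refine integral_congr_ae (Filter.Eventually.of_forall fun q₂ => ?_)
        show (∫ q₁ : R2, G (q₁, q₂)) * h q₂ = (∫ q₁ : R2, G (q₁, q₂)) ^ 2
        rw [sq]

-- final glue
/-- Equation (3.61)/(3.57):
`∫∫∫ (Σψ_in)(q₁,q₂) (Σψ_in)(q₃,q₂) ψ_in(q₁,q₃) dq₁ dq₂ dq₃ = J(μ₁,μ₂)/π³`,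
where `x.1 = q₁`, `x.2.1 = q₂`, `x.2.2 = q₃`. -/
theorem sigma_psi_triple_integral_eq_J (μ₁ : ℝ) (hμ : μ₁ ∈ Set.Icc (0:ℝ) 1) :
    (∫ x : R2 × R2 × R2,
        SigmaPsi μ₁ x.1 x.2.1 * SigmaPsi μ₁ x.2.2 x.2.1 * (psi x.1 * psi x.2.2))
      = Jfun μ₁ (1 - μ₁) / Real.pi ^ 3 := by
  have hpt : ∀ x : R2 × R2 × R2,
      SigmaPsi μ₁ x.1 x.2.1 * SigmaPsi μ₁ x.2.2 x.2.1 * (psi x.1 * psi x.2.2)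
        = (1 / Real.pi ^ 3) * (gfun μ₁ (x.1, x.2.1) * gfun μ₁ (x.2.2, x.2.1)) := by
    intro x
    rw [sigma_eq, sigma_eq]
    unfold psi gfun
    have e1 : ∀ A B : ℝ, Real.exp (A - B / 2) = Real.exp A * Real.exp (-B / 2) :=
      fun A B => by rw [← Real.exp_add]; ring_nf
    rw [e1, e1]
    set s := Real.sqrt Real.pi with hs
    have hππ : s * s = Real.pi := Real.mul_self_sqrt Real.pi_pos.le
    have hs0 : s ≠ 0 := by
      rw [hs]
      exact Real.sqrt_ne_zero'.2 Real.pi_pos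
    rw [← hππ]
    field_simp
  calc (∫ x : R2 × R2 × R2,
        SigmaPsi μ₁ x.1 x.2.1 * SigmaPsi μ₁ x.2.2 x.2.1 * (psi x.1 * psi x.2.2))
      = ∫ x : R2 × R2 × R2,
          (1 / Real.pi ^ 3) * (gfun μ₁ (x.1, x.2.1) * gfun μ₁ (x.2.2, x.2.1)) :=
        integral_congr_ae (Filter.Eventually.of_forall hpt)
    _ = (1 / Real.pi ^ 3) * ∫ x : R2 × R2 × R2,
          gfun μ₁ (x.1, x.2.1) * gfun μ₁ (x.2.2, x.2.1) := integral_const_mul _ _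
    _ = (1 / Real.pi ^ 3) * ∫ q₂ : R2, (∫ q₁ : R2, gfun μ₁ (q₁, q₂)) ^ 2 := by
        rw [gfun_fubini]
    _ = Jfun μ₁ (1 - μ₁) / Real.pi ^ 3 := by
        rw [show Jfun μ₁ (1 - μ₁) = ∫ q₂ : R2, (∫ q₁ : R2, gfun μ₁ (q₁, q₂)) ^ 2 from rfl]
        ring
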